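/- Let H_0, H_1, …, H_L be Hilbert spaces, G_m : H_m → H_{m+1} continuous linear operators for m = 0, …, L−1, and P_m : H_m → H_m orthogonal projections with Q_m = I − P_m. Define Φ(m,0) = (Q_m ∘ G_{m−1}) ∘ ⋯ ∘ (Q_1 ∘ G_0) with Φ(0,0) = id. Suppose there are constants κ ≥ 0 and B > 0 such that ‖Q_{i+1} ∘ G_i‖² ≤ κ for all i and ‖G_i‖² ≤ B for all i. Then for every m with 0 ≤ m ≤ L−1, the m-th memory term of the Mori–Zwanzig equation satisfies ‖G_{L−1} ∘ ⋯ ∘ G_{m+1} ∘ P_{m+1} ∘ G_m ∘ Φ(m,0)‖² ≤ B^{L−m} κ^m = B^L (κ/B)^m. -/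

import Mathlib

lemma sq_norm_comp_le {E F G : Type*} [NormedAddCommGroup E] [NormedAddCommGroup F]
    [NormedAddCommGroup G] [NormedSpace ℝ E] [NormedSpace ℝ F] [NormedSpace ℝ G]
    (A : F →L[ℝ] G) (C : E →L[ℝ] F) {a b : ℝ}
    (ha : ‖A‖ ^ 2 ≤ a) (hb : ‖C‖ ^ 2 ≤ b) :
    ‖A.comp C‖ ^ 2 ≤ a * b := by
  calc ‖A.comp C‖ ^ 2 ≤ (‖A‖ * ‖C‖) ^ 2 := by
        apply pow_le_pow_left₀ (norm_nonneg _) (ContinuousLinearMap.opNorm_comp_le _ _)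
    _ = ‖A‖ ^ 2 * ‖C‖ ^ 2 := by ring
    _ ≤ a * b := mul_le_mul ha hb (sq_nonneg _) ((sq_nonneg _).trans ha)

/-- **Bound on the Mori–Zwanzig memory terms.** `H m` is the `L²` space attached to layer
`m` of a stochastic neural network, `G m : H m →L H (m+1)` the one-layer composition
operator, `P m` an orthogonal projection (self-adjoint and idempotent) with
`Q m = id - P m`, `Φ m = (Q_m ∘ G_{m-1}) ∘ ⋯ ∘ (Q_1 ∘ G_0)` the orthogonal-dynamics
propagator, and `Gc i j = G_{j-1} ∘ ⋯ ∘ G_i` the multi-layer composition operator.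
If `‖Q_{i+1} ∘ G_i‖² ≤ κ` and `‖G_i‖² ≤ B` for all relevant `i`, then the `m`-th memory
term satisfies `‖G(L,m+1) ∘ P_{m+1} ∘ G_m ∘ Φ(m,0)‖² ≤ B^{L-m} κ^m = B^L (κ/B)^m`. -/
theorem mz_memory_term_bound
    (H : ℕ → Type*) [∀ m, NormedAddCommGroup (H m)]
    [∀ m, InnerProductSpace ℝ (H m)] [∀ m, CompleteSpace (H m)]
    (L : ℕ) (κ B : ℝ) (hκ : 0 ≤ κ) (hB : 0 < B)
    (G : ∀ m, H m →L[ℝ] H (m + 1))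
    (P : ∀ m, H m →L[ℝ] H m)
    (hPsa : ∀ m, IsSelfAdjoint (P m))
    (hPidem : ∀ m, (P m).comp (P m) = P m)
    (hQG : ∀ i, i + 1 ≤ L →
      ‖(ContinuousLinearMap.id ℝ (H (i + 1)) - P (i + 1)).comp (G i)‖ ^ 2 ≤ κ)
    (hGB : ∀ i, i + 1 ≤ L → ‖G i‖ ^ 2 ≤ B)
    (Φ : ∀ m, H 0 →L[ℝ] H m)
    (hΦ0 : Φ 0 = ContinuousLinearMap.id ℝ (H 0))
    (hΦS : ∀ m, Φ (m + 1)
      = ((ContinuousLinearMap.id ℝ (H (m + 1)) - P (m + 1)).comp (G m)).comp (Φ m))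
    (Gc : ∀ i j : ℕ, H i →L[ℝ] H j)
    (hGc_diag : ∀ i, Gc i i = ContinuousLinearMap.id ℝ (H i))
    (hGc_succ : ∀ i j, i ≤ j → Gc i (j + 1) = (G j).comp (Gc i j)) :
    ∀ m, m + 1 ≤ L →
      ‖(Gc (m + 1) L).comp ((P (m + 1)).comp ((G m).comp (Φ m)))‖ ^ 2
          ≤ B ^ (L - m) * κ ^ m
        ∧ B ^ (L - m) * κ ^ m = B ^ L * (κ / B) ^ m := by
  -- projection norm bound
  have hP : ∀ k, ‖P k‖ ^ 2 ≤ 1 := by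
    intro k
    have hle : ‖P k‖ ≤ 1 := by
      apply ContinuousLinearMap.opNorm_le_bound _ zero_le_one
      intro x
      have hsym := (hPsa k).isSymmetric
      have h1 : ‖P k x‖ ^ 2 = inner ℝ (P k x) (P k x) := (real_inner_self_eq_norm_sq _).symm
      have h2 : (inner ℝ (P k x) (P k x) : ℝ) = inner ℝ x (P k (P k x)) := hsym _ _
      have h3 : P k (P k x) = P k x := by
        have := congrArg (fun f => f x) (hPidem k); simpa using this
      have h4 : (inner ℝ x (P k x) : ℝ) ≤ ‖x‖ * ‖P k x‖ := real_inner_le_norm _ _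
      have h5 : ‖P k x‖ ^ 2 ≤ ‖x‖ * ‖P k x‖ := by rw [h1, h2, h3]; exact h4
      rcases eq_or_lt_of_le (norm_nonneg (P k x)) with h0 | h0
      · rw [← h0]
        simpa using norm_nonneg x
      · have h6 : ‖P k x‖ * ‖P k x‖ ≤ ‖x‖ * ‖P k x‖ := by nlinarith [h5]
        have := le_of_mul_le_mul_right h6 h0
        simpa [one_mul] using this
    calc ‖P k‖ ^ 2 ≤ 1 ^ 2 := pow_le_pow_left₀ (norm_nonneg _) hle 2
      _ = 1 := one_pow 2
  -- Φ bound
  have hΦ : ∀ m, m ≤ L → ‖Φ m‖ ^ 2 ≤ κ ^ m := by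
    intro m
    induction m with
    | zero =>
      intro _
      rw [hΦ0]
      have h1 : ‖ContinuousLinearMap.id ℝ (H 0)‖ ≤ 1 := ContinuousLinearMap.norm_id_le
      simpa using pow_le_pow_left₀ (norm_nonneg _) h1 2
    | succ n ih =>
      intro hn
      rw [hΦS n]
      have h := sq_norm_comp_le _ _ (hQG n hn) (ih (le_trans (Nat.le_succ n) hn))
      exact h.trans_eq (by ring)
  -- Gc bound
  have hGcB : ∀ i j, i ≤ j → j ≤ L → ‖Gc i j‖ ^ 2 ≤ B ^ (j - i) := by
    intro i j hij
    induction j, hij using Nat.le_induction with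
    | base =>
      intro _
      rw [hGc_diag]
      have h1 : ‖ContinuousLinearMap.id ℝ (H i)‖ ≤ 1 := ContinuousLinearMap.norm_id_le
      simpa using pow_le_pow_left₀ (norm_nonneg _) h1 2
    | succ n hn ih =>
      intro hnL
      rw [hGc_succ i n hn]
      have h1 := sq_norm_comp_le (G n) (Gc i n) (hGB n hnL) (ih (le_trans (Nat.le_succ n) hnL))
      calc ‖(G n).comp (Gc i n)‖ ^ 2 ≤ B * B ^ (n - i) := h1
        _ = B ^ (n + 1 - i) := by
            rw [← pow_succ']
            congr 1
            omega
  intro m hm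
  have hmL : m ≤ L := le_trans (Nat.le_succ m) hm
  constructor
  · have hGc := hGcB (m + 1) L hm le_rfl
    have hbig : ‖(Gc (m + 1) L).comp ((P (m + 1)).comp ((G m).comp (Φ m)))‖ ^ 2
        ≤ B ^ (L - (m + 1)) * (1 * (B * κ ^ m)) :=
      sq_norm_comp_le _ _ hGc (sq_norm_comp_le _ _ (hP (m + 1))
        (sq_norm_comp_le _ _ (hGB m hm) (hΦ m hmL)))
    calc _ ≤ B ^ (L - (m + 1)) * (1 * (B * κ ^ m)) := hbig
      _ = (B ^ (L - (m + 1)) * B) * κ ^ m := by ring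
      _ = B ^ (L - m) * κ ^ m := by
          rw [← pow_succ]
          congr 2
          omega
  · have hBe : (B : ℝ) ≠ 0 := ne_of_gt hB
    have hpow : B ^ L = B ^ (L - m) * B ^ m := by
      rw [← pow_add]
      congr 1
      omega
    rw [div_pow, hpow]
    field_simp
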